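/- For every integer n ≥ 2 there exist two distinct characteristic functions f and g of probability measures on ℝ such that f(x)^n = g(x)^n for all x ∈ ℝ. -/

import Mathlib

open MeasureTheory Set

/-- The characteristic function of a measure `μ` on `ℝ`: `x ↦ ∫ e^{ixt} dμ(t)`. -/
noncomputable def charFunOf (μ : Measure ℝ) : ℝ → ℂ :=
  fun x => ∫ t, Complex.exp (x * t * Complex.I) ∂μ

/-- `f` is the characteristic function of some probability measure on `ℝ`. -/
def IsCharFun (f : ℝ → ℂ) : Prop :=
  ∃ μ : Measure ℝ, IsProbabilityMeasure μ ∧ f = charFunOf μ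

section Aux

open FourierTransform Complex
open scoped Real RealInnerProductSpace NNReal ENNReal

noncomputable section

/-- The triangle function. -/
def tri (y : ℝ) : ℝ := max 0 (1 - |y|)

lemma tri_nonneg (y : ℝ) : 0 ≤ tri y := le_max_left _ _

lemma tri_eq_zero {y : ℝ} (h : 1 ≤ |y|) : tri y = 0 := max_eq_left (by linarith)

lemma tri_zero : tri 0 = 1 := by simp [tri]

lemma tri_le_one (y : ℝ) : tri y ≤ 1 :=
  max_le (by norm_num) (by simpa using abs_nonneg y)

lemma continuous_tri : Continuous tri :=
  continuous_const.max (continuous_const.sub continuous_abs)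

/-- Complex-valued triangle function. -/
def triC : ℝ → ℂ := fun y => (tri y : ℂ)

lemma continuous_triC : Continuous triC := Complex.continuous_ofReal.comp continuous_tri

lemma hasCompactSupport_triC : HasCompactSupport triC := by
  apply HasCompactSupport.intro (isCompact_Icc (a := (-1:ℝ)) (b := 1))
  intro x hx
  simp only [mem_Icc, not_and_or, not_le] at hx
  have : 1 ≤ |x| := by rcases hx with h | h <;> [exact le_abs.2 (Or.inr (by linarith)); exact le_abs.2 (Or.inl h.le)]
  simp [triC, tri_eq_zero this]

lemma integrable_triC : Integrable triC :=
  continuous_triC.integrable_of_hasCompactSupport hasCompactSupport_triC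

lemma integrable_triC_shift (a : ℝ) : Integrable (triC ∘ fun y => y + a) := by
  apply Continuous.integrable_of_hasCompactSupport
    (continuous_triC.comp (continuous_id.add continuous_const))
  apply HasCompactSupport.intro (isCompact_Icc (a := (-1 - a : ℝ)) (b := 1 - a))
  intro x hx
  simp only [mem_Icc, not_and_or, not_le] at hx
  have : 1 ≤ |x + a| := by
    rcases hx with h | h
    · exact le_abs.2 (Or.inr (by linarith))
    · exact le_abs.2 (Or.inl (by linarith))
  simp [Function.comp, triC, tri_eq_zero this]

/-- Fourier transform of the triangle function (the Fejér-type kernel). -/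
def S (ξ : ℝ) : ℝ := if ξ = 0 then 1 else (1 - Real.cos (2 * π * ξ)) / (2 * π ^ 2 * ξ ^ 2)

lemma S_nonneg (ξ : ℝ) : 0 ≤ S ξ := by
  unfold S
  split_ifs with h
  · norm_num
  · apply div_nonneg (by nlinarith [Real.cos_le_one (2*π*ξ)])
    have : (0:ℝ) < π := Real.pi_pos
    positivity

lemma one_sub_cos_le (y : ℝ) : 1 - Real.cos y ≤ y ^ 2 / 2 := by
  have h1 := Real.sin_sq_le_sq (x := y / 2)
  have h2 := Real.sin_sq_add_cos_sq (y / 2)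
  have h3 : Real.cos (y/2) ^ 2 = 1/2 + Real.cos y / 2 := by
    have := Real.cos_sq (y/2)
    rwa [mul_div_cancel₀ y (two_ne_zero)] at this
  nlinarith

lemma S_le (ξ : ℝ) : S ξ ≤ 2 / (1 + ξ ^ 2) := by
  have hπ : (0:ℝ) < π := Real.pi_pos
  unfold S
  split_ifs with h
  · rw [h]; norm_num
  · have hξ : 0 < ξ ^ 2 := by positivity
    rcases le_total (ξ^2) 1 with hle | hle
    · have hb : 1 - Real.cos (2*π*ξ) ≤ (2*π*ξ)^2 / 2 := one_sub_cos_le _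
      rw [div_le_div_iff₀ (by positivity) (by positivity)]
      calc (1 - Real.cos (2*π*ξ)) * (1 + ξ^2) ≤ ((2*π*ξ)^2/2) * (1 + ξ^2) := by
            apply mul_le_mul_of_nonneg_right hb (by positivity)
        _ ≤ 2 * (2*π^2*ξ^2) := by nlinarith
    · have hb : 1 - Real.cos (2*π*ξ) ≤ 2 := by nlinarith [Real.neg_one_le_cos (2*π*ξ)]
      rw [div_le_div_iff₀ (by positivity) (by positivity)]
      have hπ2 : (1:ℝ) ≤ π ^ 2 := by nlinarith [Real.pi_gt_three]
      calc (1 - Real.cos (2*π*ξ)) * (1 + ξ^2) ≤ 2 * (1 + ξ^2) := by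
            apply mul_le_mul_of_nonneg_right hb (by positivity)
        _ ≤ 2 * (2*π^2*ξ^2) := by nlinarith

lemma measurable_S : Measurable S := by
  unfold S
  apply Measurable.ite
  · simpa using measurableSet_singleton (0:ℝ)
  · exact measurable_const
  · fun_prop

-- antiderivative computations
lemma integral_one_sub_exp (c : ℂ) (hc : c ≠ 0) :
    ∫ v in (0:ℝ)..1, (1 - (v:ℂ)) * Complex.exp (c * v) = (Complex.exp c - 1 - c) / c ^ 2 := by
  have key : ∀ t : ℝ, HasDerivAt (fun t : ℝ => ((1 - (t:ℂ)) / c + 1 / c ^ 2) * Complex.exp (c * t))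
      ((1 - (t:ℂ)) * Complex.exp (c * t)) t := by
    intro t
    have h1 : HasDerivAt (fun t : ℝ => ((1 - (t:ℂ)) / c + 1 / c ^ 2)) (-1 / c) t := by
      have : HasDerivAt (fun z : ℂ => (1 - z) / c + 1 / c ^ 2) (-1 / c) (t:ℂ) :=
        (((hasDerivAt_id ((t:ℝ):ℂ)).const_sub 1).div_const c).add_const (1/c^2)
      exact this.comp_ofReal
    have h2 : HasDerivAt (fun t : ℝ => Complex.exp (c * t)) (c * Complex.exp (c * t)) t := by
      have : HasDerivAt (fun z : ℂ => Complex.exp (c * z)) (c * Complex.exp (c * t)) ((t:ℝ):ℂ) := by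
        simpa [mul_comm] using ((hasDerivAt_id ((t:ℝ):ℂ)).const_mul c).cexp
      exact this.comp_ofReal
    have := h1.mul h2
    convert this using 1
    · rfl
    · rfl
    field_simp
    ring
  rw [intervalIntegral.integral_eq_sub_of_hasDerivAt (fun t _ => key t)
    ((Continuous.intervalIntegrable (by fun_prop : Continuous fun t : ℝ => (1 - (t:ℂ)) * Complex.exp (c * t))) _ _)]
  push_cast
  simp only [Complex.ofReal_one, Complex.ofReal_zero, mul_one, mul_zero, Complex.exp_zero]
  field_simp
  ring

lemma integral_one_add_exp (c : ℂ) (hc : c ≠ 0) :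
    ∫ v in (-1:ℝ)..0, (1 + (v:ℂ)) * Complex.exp (c * v) = (Complex.exp (-c) + c - 1) / c ^ 2 := by
  have key : ∀ t : ℝ, HasDerivAt (fun t : ℝ => ((1 + (t:ℂ)) / c - 1 / c ^ 2) * Complex.exp (c * t))
      ((1 + (t:ℂ)) * Complex.exp (c * t)) t := by
    intro t
    have h1 : HasDerivAt (fun t : ℝ => ((1 + (t:ℂ)) / c - 1 / c ^ 2)) (1 / c) t := by
      have : HasDerivAt (fun z : ℂ => (1 + z) / c - 1 / c ^ 2) (1 / c) (t:ℂ) :=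
        (((hasDerivAt_id ((t:ℝ):ℂ)).const_add 1).div_const c).sub_const (1/c^2)
      exact this.comp_ofReal
    have h2 : HasDerivAt (fun t : ℝ => Complex.exp (c * t)) (c * Complex.exp (c * t)) t := by
      have : HasDerivAt (fun z : ℂ => Complex.exp (c * z)) (c * Complex.exp (c * t)) ((t:ℝ):ℂ) := by
        simpa [mul_comm] using ((hasDerivAt_id ((t:ℝ):ℂ)).const_mul c).cexp
      exact this.comp_ofReal
    have := h1.mul h2
    convert this using 1
    · rfl
    · rfl
    field_simp
    ring
  rw [intervalIntegral.integral_eq_sub_of_hasDerivAt (fun t _ => key t)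
    ((Continuous.intervalIntegrable (by fun_prop : Continuous fun t : ℝ => (1 + (t:ℂ)) * Complex.exp (c * t))) _ _)]
  push_cast
  simp only [Complex.ofReal_zero, Complex.ofReal_neg, Complex.ofReal_one, mul_zero, mul_neg,
    mul_one, Complex.exp_zero]
  field_simp
  ring

lemma fourier_triC (ξ : ℝ) : 𝓕 triC ξ = ((S ξ : ℝ) : ℂ) := by
  rw [Real.fourier_real_eq_integral_exp_smul]
  have hsupp : ∀ v : ℝ, v ∉ Icc (-1:ℝ) 1 →
      Complex.exp (((-2 * π * v * ξ : ℝ) : ℂ) * Complex.I) • triC v = 0 := by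
    intro v hv
    simp only [mem_Icc, not_and_or, not_le] at hv
    have : 1 ≤ |v| := by
      rcases hv with h | h
      · exact le_abs.2 (Or.inr (by linarith))
      · exact le_abs.2 (Or.inl h.le)
    simp [triC, tri_eq_zero this]
  rw [← setIntegral_eq_integral_of_forall_compl_eq_zero hsupp]
  rw [integral_Icc_eq_integral_Ioc, ← intervalIntegral.integral_of_le (by norm_num : (-1:ℝ) ≤ 1)]
  set c : ℂ := ((-2 * π * ξ : ℝ) : ℂ) * Complex.I with hc
  have hcont : Continuous fun v : ℝ => Complex.exp (((-2 * π * v * ξ : ℝ):ℂ) * Complex.I) • triC v := by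
    apply Continuous.smul (f := fun v : ℝ => Complex.exp (((-2 * π * v * ξ : ℝ):ℂ) * Complex.I)) _ continuous_triC
    exact Complex.continuous_exp.comp (by fun_prop)
  have hsplit : (∫ v in (-1:ℝ)..1, Complex.exp (((-2 * π * v * ξ : ℝ):ℂ) * Complex.I) • triC v)
      = (∫ v in (-1:ℝ)..0, (1 + (v:ℂ)) * Complex.exp (c * v))
        + ∫ v in (0:ℝ)..1, (1 - (v:ℂ)) * Complex.exp (c * v) := by
    rw [← intervalIntegral.integral_add_adjacent_intervals (a := (-1:ℝ)) (b := 0) (c := 1)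
      (hcont.intervalIntegrable _ _) (hcont.intervalIntegrable _ _)]
    congr 1
    · apply intervalIntegral.integral_congr
      intro v hv
      rw [uIcc_of_le (by norm_num : (-1:ℝ) ≤ 0), mem_Icc] at hv
      have habs : |v| = -v := abs_of_nonpos hv.2
      have htri : triC v = 1 + (v:ℂ) := by
        simp only [triC, tri, habs]
        rw [max_eq_right (by linarith)]
        push_cast; ring
      simp only [smul_eq_mul, htri]
      rw [show (((-2 * π * v * ξ : ℝ):ℂ) * Complex.I) = c * v by rw [hc]; push_cast; ring]
      ring
    · apply intervalIntegral.integral_congr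
      intro v hv
      rw [uIcc_of_le (by norm_num : (0:ℝ) ≤ 1), mem_Icc] at hv
      have habs : |v| = v := abs_of_nonneg hv.1
      have htri : triC v = 1 - (v:ℂ) := by
        simp only [triC, tri, habs]
        rw [max_eq_right (by linarith)]
        push_cast; ring
      simp only [smul_eq_mul, htri]
      rw [show (((-2 * π * v * ξ : ℝ):ℂ) * Complex.I) = c * v by rw [hc]; push_cast; ring]
      ring
  rw [hsplit]
  rcases eq_or_ne ξ 0 with h0 | h0
  · subst h0
    have hc0 : c = 0 := by simp [hc]
    simp only [hc0, zero_mul, Complex.exp_zero, mul_one, S, if_pos rfl]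
    have e1 : (∫ v in (-1:ℝ)..0, (1 + (v:ℂ))) = 1/2 := by
      have : (∫ v in (-1:ℝ)..0, (1 + (v:ℂ))) = ((∫ v in (-1:ℝ)..0, (1 + v : ℝ) : ℝ) : ℂ) := by
        rw [← intervalIntegral.integral_ofReal]
        congr 1; funext v; push_cast; ring
      rw [this, intervalIntegral.integral_add (intervalIntegrable_const)
        (((by fun_prop : Continuous fun v : ℝ => v).intervalIntegrable) _ _), integral_id]
      simp; norm_num
    have e2 : (∫ v in (0:ℝ)..1, (1 - (v:ℂ))) = 1/2 := by
      have : (∫ v in (0:ℝ)..1, (1 - (v:ℂ))) = ((∫ v in (0:ℝ)..1, (1 - v : ℝ) : ℝ) : ℂ) := by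
        rw [← intervalIntegral.integral_ofReal]
        congr 1; funext v; push_cast; ring
      rw [this, intervalIntegral.integral_sub (intervalIntegrable_const)
        (((by fun_prop : Continuous fun v : ℝ => v).intervalIntegrable) _ _), integral_id]
      simp; norm_num
    rw [e1, e2]; norm_num
  · have hr : (-2 * π * ξ : ℝ) ≠ 0 :=
      mul_ne_zero (mul_ne_zero (by norm_num) Real.pi_ne_zero) h0
    have hcne : c ≠ 0 := by
      rw [hc]
      exact mul_ne_zero (Complex.ofReal_ne_zero.2 hr) Complex.I_ne_zero
    rw [integral_one_add_exp c hcne, integral_one_sub_exp c hcne]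
    have hsum : (Complex.exp (-c) + c - 1) / c ^ 2 + (Complex.exp c - 1 - c) / c ^ 2
        = (Complex.exp c + Complex.exp (-c) - 2) / c ^ 2 := by
      rw [← add_div]; ring_nf
    rw [hsum]
    have hcos : Complex.exp c + Complex.exp (-c) = 2 * ((Real.cos (2 * π * ξ) : ℝ) : ℂ) := by
      rw [hc, show -(((-2 * π * ξ : ℝ):ℂ) * Complex.I) = ((2 * π * ξ : ℝ):ℂ) * Complex.I by
        push_cast; ring]
      simp only [Complex.exp_mul_I]
      rw [← Complex.ofReal_cos, ← Complex.ofReal_sin, ← Complex.ofReal_cos, ← Complex.ofReal_sin]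
      rw [show (-2 * π * ξ : ℝ) = -(2 * π * ξ) by ring, Real.cos_neg, Real.sin_neg]
      push_cast; ring
    have hc2 : c ^ 2 = -(((2 * π * ξ : ℝ) : ℂ) ^ 2) := by
      rw [hc, mul_pow, Complex.I_sq]
      push_cast; ring
    rw [hcos, hc2]
    have hS : S ξ = (1 - Real.cos (2 * π * ξ)) / (2 * π ^ 2 * ξ ^ 2) := by
      simp [S, h0]
    rw [hS]
    have hπ := Real.pi_ne_zero
    have hden : ((2 * π * ξ : ℝ) : ℂ) ^ 2 ≠ 0 :=
      pow_ne_zero _ (Complex.ofReal_ne_zero.2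
        (mul_ne_zero (mul_ne_zero two_ne_zero Real.pi_ne_zero) h0))
    field_simp
    push_cast
    ring

/-- The family of candidate characteristic functions, parametrized by a unimodular `w`. -/
def Fw (w : ℂ) : ℝ → ℂ :=
  triC + (w / 4) • (triC ∘ fun y => y + (-2)) + ((starRingEnd ℂ) w / 4) • (triC ∘ fun y => y + 2)

lemma Fw_apply (w : ℂ) (y : ℝ) :
    Fw w y = triC y + w / 4 * triC (y - 2) + (starRingEnd ℂ) w / 4 * triC (y + 2) := by
  simp only [Fw, Pi.add_apply, Pi.smul_apply, Function.comp_apply, smul_eq_mul]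
  norm_num [sub_eq_add_neg]

lemma continuous_Fw (w : ℂ) : Continuous (Fw w) := by
  rw [show Fw w = fun y => triC y + w / 4 * triC (y - 2) + (starRingEnd ℂ) w / 4 * triC (y + 2)
    from funext (Fw_apply w)]
  exact (continuous_triC.add (continuous_const.mul
      (continuous_triC.comp (continuous_id.sub continuous_const)))).add
    (continuous_const.mul (continuous_triC.comp (continuous_id.add continuous_const)))

lemma integrable_Fw (w : ℂ) : Integrable (Fw w) := by
  unfold Fw
  exact (integrable_triC.add ((integrable_triC_shift (-2)).smul _)).add
    ((integrable_triC_shift 2).smul _)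

lemma four_add {f g : ℝ → ℂ} (hf : Integrable f) (hg : Integrable g) :
    𝓕 (f + g) = 𝓕 f + 𝓕 g :=
  VectorFourier.fourierIntegral_add (L := innerₗ ℝ) Real.continuous_fourierChar (by exact continuous_inner) hf hg

lemma four_smul (c : ℂ) (f : ℝ → ℂ) :
    𝓕 (c • f) = c • 𝓕 f :=
  VectorFourier.fourierIntegral_const_smul _ _ _ _ _

lemma four_shift (f : ℝ → ℂ) (a ξ : ℝ) :
    𝓕 (f ∘ fun y => y + a) ξ
      = Complex.exp (((2 * π * (a * ξ) : ℝ) : ℂ) * Complex.I) * 𝓕 f ξ := by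
  have h : 𝓕 (f ∘ fun y => y + a) ξ
      = Real.fourierChar ((innerₗ ℝ) a ξ) • 𝓕 f ξ :=
    congrFun (VectorFourier.fourierIntegral_comp_add_right Real.fourierChar
      (volume : Measure ℝ) (innerₗ ℝ) f a) ξ
  rw [h, Circle.smul_def, Real.fourierChar_apply,
    show ((innerₗ ℝ) a) ξ = a * ξ by simp [mul_comm], smul_eq_mul]

/-- The density of the corresponding probability measure. -/
def rho (w : ℂ) (ξ : ℝ) : ℝ :=
  S ξ * (1 + (w / 2 * Complex.exp (((2 * π * (-2 * ξ) : ℝ) : ℂ) * Complex.I)).re)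

lemma four_Fw (w : ℂ) (ξ : ℝ) :
    𝓕 (Fw w) ξ = ((rho w ξ : ℝ) : ℂ) := by
  have expand : 𝓕 (Fw w) ξ
      = 𝓕 triC ξ
        + w / 4 * 𝓕 (triC ∘ fun y => y + (-2)) ξ
        + (starRingEnd ℂ) w / 4 * 𝓕 (triC ∘ fun y => y + 2) ξ := by
    unfold Fw
    rw [four_add (integrable_triC.add ((integrable_triC_shift (-2)).smul _))
      ((integrable_triC_shift 2).smul _),
      four_add integrable_triC ((integrable_triC_shift (-2)).smul _), four_smul, four_smul]
    simp [smul_eq_mul]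
  rw [expand, four_shift, four_shift, fourier_triC]
  set E : ℂ := Complex.exp (((2 * π * (-2 * ξ) : ℝ) : ℂ) * Complex.I) with hE
  have hconj : Complex.exp (((2 * π * (2 * ξ) : ℝ) : ℂ) * Complex.I) = (starRingEnd ℂ) E := by
    rw [hE, ← Complex.exp_conj, map_mul, Complex.conj_I, Complex.conj_ofReal]
    congr 1
    push_cast
    ring
  rw [hconj]
  have hz : w / 4 * E + (starRingEnd ℂ) w / 4 * (starRingEnd ℂ) E
      = (((w / 2 * E).re : ℝ) : ℂ) := by
    have h1 : (starRingEnd ℂ) w / 4 * (starRingEnd ℂ) E = (starRingEnd ℂ) (w / 4 * E) := by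
      rw [map_mul, map_div₀, map_ofNat]
    rw [h1, Complex.add_conj]
    have h2 : w / 2 * E = 2 * (w / 4 * E) := by ring
    rw [h2]
    have h3 : (2 * (w / 4 * E)).re = 2 * (w / 4 * E).re := by
      simp [Complex.mul_re]
    rw [h3]
  have hrho : ((rho w ξ : ℝ) : ℂ) = ((S ξ : ℝ) : ℂ) * (1 + (((w / 2 * E).re : ℝ) : ℂ)) := by
    unfold rho
    rw [Complex.ofReal_mul, Complex.ofReal_add, Complex.ofReal_one, hE]
  rw [hrho, ← hz]
  ring

lemma re_bound (w : ℂ) (hw : ‖w‖ ≤ 1) (ξ : ℝ) :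
    |(w / 2 * Complex.exp (((2 * π * (-2 * ξ) : ℝ) : ℂ) * Complex.I)).re| ≤ 1 / 2 := by
  refine (Complex.abs_re_le_norm _).trans ?_
  rw [norm_mul, Complex.norm_exp_ofReal_mul_I, mul_one, norm_div, Complex.norm_two]
  linarith

lemma rho_nonneg (w : ℂ) (hw : ‖w‖ ≤ 1) (ξ : ℝ) : 0 ≤ rho w ξ := by
  unfold rho
  exact mul_nonneg (S_nonneg ξ) (by linarith [(abs_le.1 (re_bound w hw ξ)).1])

lemma rho_le (w : ℂ) (hw : ‖w‖ ≤ 1) (ξ : ℝ) : |rho w ξ| ≤ 3 * (1 + ξ ^ 2)⁻¹ := by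
  unfold rho
  have h1 := abs_le.1 (re_bound w hw ξ)
  rw [abs_mul, _root_.abs_of_nonneg (S_nonneg ξ)]
  have h2 : |1 + (w / 2 * Complex.exp (((2 * π * (-2 * ξ) : ℝ) : ℂ) * Complex.I)).re| ≤ 3 / 2 := by
    rw [abs_le]
    constructor <;> linarith [h1.1, h1.2]
  have hS := S_le ξ
  have hpos : (0:ℝ) < 1 + ξ ^ 2 := by positivity
  calc S ξ * |1 + (w / 2 * Complex.exp (((2 * π * (-2 * ξ) : ℝ) : ℂ) * Complex.I)).re|
      ≤ (2 / (1 + ξ ^ 2)) * (3 / 2) := by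
        apply mul_le_mul hS h2 (abs_nonneg _) (by positivity)
    _ = 3 * (1 + ξ ^ 2)⁻¹ := by field_simp

lemma measurable_rho (w : ℂ) : Measurable (rho w) := by
  apply measurable_S.mul
  apply Measurable.const_add
  apply Continuous.measurable
  apply Complex.continuous_re.comp
  exact continuous_const.mul (Complex.continuous_exp.comp (by fun_prop))

lemma integrable_rho (w : ℂ) (hw : ‖w‖ ≤ 1) : Integrable (rho w) := by
  apply (integrable_inv_one_add_sq.const_mul 3).mono'
    (measurable_rho w).aestronglyMeasurable
  exact ae_of_all _ fun ξ => by simpa [Real.norm_eq_abs] using rho_le w hw ξ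

lemma integrable_four_Fw (w : ℂ) (hw : ‖w‖ ≤ 1) :
    Integrable (𝓕 (Fw w)) := by
  rw [show 𝓕 (Fw w) = fun ξ => ((rho w ξ : ℝ) : ℂ) from funext (four_Fw w)]
  exact (integrable_rho w hw).ofReal

lemma four_inv (w : ℂ) (hw : ‖w‖ ≤ 1) :
    𝓕⁻ (𝓕 (Fw w)) = Fw w :=
  Continuous.fourierInv_fourier_eq (continuous_Fw w) (integrable_Fw w) (integrable_four_Fw w hw)

lemma Fw_zero (w : ℂ) : Fw w 0 = 1 := by
  rw [Fw_apply]
  norm_num [triC, tri_zero, tri_eq_zero (show (1:ℝ) ≤ |(-2:ℝ)| by norm_num),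
    tri_eq_zero (show (1:ℝ) ≤ |(2:ℝ)| by norm_num)]

lemma integral_rho (w : ℂ) (hw : ‖w‖ ≤ 1) : ∫ ξ, rho w ξ = 1 := by
  have h1 : Fw w 0 = ∫ ξ, ((rho w ξ : ℝ) : ℂ) := by
    conv_lhs => rw [← four_inv w hw]
    rw [Real.fourierInv_eq]
    exact integral_congr_ae (Filter.Eventually.of_forall fun v => by simp [four_Fw])
  have h2 : (1 : ℂ) = ((∫ ξ, rho w ξ : ℝ) : ℂ) := by
    rw [← Fw_zero w, h1]
    exact integral_ofReal
  exact_mod_cast h2.symm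

/-- The probability measure whose characteristic function is built from `Fw w`. -/
def mOf (w : ℂ) : Measure ℝ := volume.withDensity fun ξ => ENNReal.ofReal (rho w ξ)

lemma isProb_mOf (w : ℂ) (hw : ‖w‖ ≤ 1) : IsProbabilityMeasure (mOf w) := by
  constructor
  rw [mOf, withDensity_apply _ MeasurableSet.univ, Measure.restrict_univ,
    ← ofReal_integral_eq_lintegral_ofReal (integrable_rho w hw)
      (Filter.Eventually.of_forall (rho_nonneg w hw)), integral_rho w hw]
  norm_num

lemma charFun_mOf (w : ℂ) (hw : ‖w‖ ≤ 1) (x : ℝ) :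
    charFunOf (mOf w) x = Fw w (x / (2 * π)) := by
  unfold charFunOf mOf
  rw [show (fun ξ => ENNReal.ofReal (rho w ξ))
      = (fun ξ => (((rho w ξ).toNNReal : ℝ≥0) : ℝ≥0∞)) from rfl]
  rw [integral_withDensity_eq_integral_smul (measurable_rho w).real_toNNReal]
  conv_rhs => rw [← four_inv w hw]
  rw [Real.fourierInv_eq']
  refine integral_congr_ae (Filter.Eventually.of_forall fun t => ?_)
  simp only [four_Fw, NNReal.smul_def, Real.coe_toNNReal _ (rho_nonneg w hw t),
    Complex.real_smul, smul_eq_mul]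
  have hinner : (inner ℝ t (x / (2 * π)) : ℝ) = t * (x / (2 * π)) := by simp [mul_comm]
  have harg : (2 * π * (t * (x / (2 * π))) : ℝ) = x * t := by
    have := Real.pi_ne_zero
    field_simp
  rw [hinner, harg]
  push_cast
  ring

lemma master (w : ℂ) (hw : ‖w‖ ≤ 1) :
    ∃ μ : Measure ℝ, IsProbabilityMeasure μ ∧ ∀ x, charFunOf μ x = Fw w (x / (2 * π)) :=
  ⟨mOf w, isProb_mOf w hw, charFun_mOf w hw⟩

lemma Fw_pow (n : ℕ) (w : ℂ) (hw : w ^ n = 1) (hw' : (starRingEnd ℂ) w ^ n = 1) (y : ℝ) :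
    Fw w y ^ n = Fw 1 y ^ n := by
  rcases le_or_gt y (-1) with h | h
  · have h1 : triC y = 0 := by
      have hy : (1:ℝ) ≤ |y| := le_abs.2 (Or.inr (by linarith))
      simp [triC, tri_eq_zero hy]
    have h2 : triC (y - 2) = 0 := by
      have hy : (1:ℝ) ≤ |y - 2| := le_abs.2 (Or.inr (by linarith))
      simp [triC, tri_eq_zero hy]
    rw [Fw_apply, Fw_apply, h1, h2, map_one]
    have l : (0:ℂ) + w / 4 * 0 + (starRingEnd ℂ) w / 4 * triC (y + 2)
        = (starRingEnd ℂ) w * (triC (y + 2) / 4) := by ring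
    have r : (0:ℂ) + 1 / 4 * 0 + 1 / 4 * triC (y + 2) = 1 * (triC (y + 2) / 4) := by ring
    rw [l, r, mul_pow, mul_pow, hw', one_pow]
  · rcases le_or_gt 1 y with h' | h'
    · have h1 : triC y = 0 := by
        have hy : (1:ℝ) ≤ |y| := le_abs.2 (Or.inl h')
        simp [triC, tri_eq_zero hy]
      have h2 : triC (y + 2) = 0 := by
        have hy : (1:ℝ) ≤ |y + 2| := le_abs.2 (Or.inl (by linarith))
        simp [triC, tri_eq_zero hy]
      rw [Fw_apply, Fw_apply, h1, h2, map_one]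
      have l : (0:ℂ) + w / 4 * triC (y - 2) + (starRingEnd ℂ) w / 4 * 0
          = w * (triC (y - 2) / 4) := by ring
      have r : (0:ℂ) + 1 / 4 * triC (y - 2) + 1 / 4 * 0 = 1 * (triC (y - 2) / 4) := by ring
      rw [l, r, mul_pow, mul_pow, hw, one_pow]
    · have h1 : triC (y - 2) = 0 := by
        have hy : (1:ℝ) ≤ |y - 2| := le_abs.2 (Or.inr (by linarith))
        simp [triC, tri_eq_zero hy]
      have h2 : triC (y + 2) = 0 := by
        have hy : (1:ℝ) ≤ |y + 2| := le_abs.2 (Or.inl (by linarith))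
        simp [triC, tri_eq_zero hy]
      rw [Fw_apply, Fw_apply, h1, h2]
      ring

lemma Fw_two (w : ℂ) : Fw w 2 = w / 4 := by
  rw [Fw_apply]
  have h2 : triC (2:ℝ) = 0 := by
    have : (1:ℝ) ≤ |(2:ℝ)| := by norm_num
    simp [triC, tri_eq_zero this]
  have h0 : triC ((2:ℝ) - 2) = 1 := by norm_num [triC, tri_zero]
  have h4 : triC ((2:ℝ) + 2) = 0 := by
    have : (1:ℝ) ≤ |(2:ℝ) + 2| := by norm_num
    simp [triC, tri_eq_zero this]
  rw [h2, h0, h4]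
  ring

end

end Aux

/-- For every integer `n ≥ 2` there exist two distinct characteristic functions
`f, g` with `f^n = g^n`. -/
theorem stmt15 (n : ℕ) (hn : 2 ≤ n) :
    ∃ f g : ℝ → ℂ, IsCharFun f ∧ IsCharFun g ∧ f ≠ g ∧ ∀ x, f x ^ n = g x ^ n := by
  have hπ := Real.pi_pos
  have hn0 : (0:ℕ) < n := by omega
  have hnR : (n:ℝ) ≠ 0 := Nat.cast_ne_zero.2 (by omega)
  have hnC : (n:ℂ) ≠ 0 := Nat.cast_ne_zero.2 (by omega)
  set ω : ℂ := Complex.exp (((2 * Real.pi / n : ℝ) : ℂ) * Complex.I) with hω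
  have hnorm : ‖ω‖ ≤ 1 := by
    rw [hω, Complex.norm_exp_ofReal_mul_I]
  have hωpow : ω ^ n = 1 := by
    rw [hω, ← Complex.exp_nat_mul]
    rw [show (n:ℂ) * (((2 * Real.pi / n : ℝ):ℂ) * Complex.I)
        = 2 * (Real.pi:ℂ) * Complex.I by push_cast; field_simp [hnC]]
    exact Complex.exp_two_pi_mul_I
  have hωcpow : ((starRingEnd ℂ) ω) ^ n = 1 := by rw [← map_pow, hωpow, map_one]
  have hωne : ω ≠ 1 := by
    intro h
    rw [hω, Complex.exp_eq_one_iff] at h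
    obtain ⟨k, hk⟩ := h
    have him := congrArg Complex.im hk
    simp [Complex.mul_im] at him
    -- him : 2 * π / n = k * (2 * π)
    have hkr : (k:ℝ) = 1 / n := by
      field_simp at him ⊢
      nlinarith [him]
    have h1n : (0:ℝ) < 1 / n := by positivity
    have h1n2 : (1:ℝ) / n < 1 := by
      rw [div_lt_one (by positivity)]
      exact_mod_cast (by omega : 1 < n)
    rcases Int.lt_or_le k 1 with hk1 | hk1
    · have hk0 : k ≤ 0 := by omega
      have : (k:ℝ) ≤ 0 := by exact_mod_cast hk0
      linarith
    · have : (1:ℝ) ≤ (k:ℝ) := by exact_mod_cast hk1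
      linarith
  obtain ⟨μ₁, hP₁, hc₁⟩ := master 1 (by norm_num)
  obtain ⟨μ₂, hP₂, hc₂⟩ := master ω hnorm
  refine ⟨charFunOf μ₁, charFunOf μ₂, ⟨μ₁, hP₁, rfl⟩, ⟨μ₂, hP₂, rfl⟩, ?_, ?_⟩
  · intro hEq
    have h4 := congrFun hEq (4 * Real.pi)
    rw [hc₁, hc₂] at h4
    have hy : (4 * Real.pi) / (2 * Real.pi) = (2:ℝ) := by
      field_simp
      ring
    rw [hy, Fw_two, Fw_two] at h4
    apply hωne
    field_simp at h4
    exact h4.symm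
  · intro x
    rw [hc₁, hc₂]
    exact (Fw_pow n ω hωpow hωcpow _).symm
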